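/- Let ℳ(S) = {T ∈ ℒ(S) : [T, A] ∈ 𝔅(S) for all A ∈ 𝔅(S)}, a norm-closed subspace of ℒ(S) containing 𝔅(S). The commutant identity ℒ(S) ∩ 𝔅(S)′ = ℂ·I holds, where 𝔅(S)′ is the commutant of 𝔅(S) in B(ℓ²(S)). -/

import Mathlib

/-- The defining relations of Thompson's semigroup:
`X_j * X_i = X_i * X_{j+1}` for `i < j`. -/
def thompsonRel : FreeMonoid ℕ → FreeMonoid ℕ → Prop := fun a b =>
  ∃ i j : ℕ, i < j ∧ a = FreeMonoid.of j * FreeMonoid.of i ∧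
    b = FreeMonoid.of i * FreeMonoid.of (j + 1)

def thompsonCon : Con (FreeMonoid ℕ) := conGen thompsonRel

/-- Thompson's semigroup (with unit). -/
def ThompsonS : Type := thompsonCon.Quotient

instance : Monoid ThompsonS := inferInstanceAs (Monoid thompsonCon.Quotient)

/-- The generators of Thompson's semigroup. -/
def X (n : ℕ) : ThompsonS := thompsonCon.mk' (FreeMonoid.of n)


noncomputable instance : DecidableEq ThompsonS := Classical.decEq _

/-- The Hilbert space `ℓ²(S)` of Thompson's semigroup. -/
noncomputable abbrev ThompsonH : Type := lp (fun _ : ThompsonS => ℂ) 2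

set_option synthInstance.maxHeartbeats 1000000
set_option maxHeartbeats 1000000

namespace ThompsonNF

/-- Insert a generator index into a (normal-form) word. -/
def ins : ℕ → List ℕ → List ℕ
  | a, [] => [a]
  | a, b :: t => if b < a then b :: ins (a + 1) t else a :: b :: t

/-- Normal form of a word. -/
def nf (l : List ℕ) : List ℕ := l.foldr ins []

lemma ins_ins (i j : ℕ) (hij : i < j) : ∀ l : List ℕ, ins j (ins i l) = ins i (ins (j+1) l) := by
  intro l
  induction l generalizing i j with
  | nil =>
    simp only [ins, if_pos hij]
    rw [if_neg (by omega)]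
  | cons b t ih =>
    by_cases hb : b < i
    · simp only [ins, if_pos hb, if_pos (by omega : b < j), if_pos (by omega : b < j + 1),
        if_pos hb]
      rw [ih (i+1) (j+1) (by omega)]
    · by_cases hbj : b < j
      · simp only [ins, if_neg hb, if_pos hij, if_pos hbj, if_neg hb,
          if_pos (by omega : b < j + 1)]
      · by_cases hbj1 : b < j + 1
        · simp only [ins, if_neg hb, if_pos hij, if_neg hbj, if_pos hbj1, if_neg hb]
        · simp only [ins, if_neg hb, if_pos hij, if_neg hbj, if_neg hbj1,
            if_neg (by omega : ¬ j + 1 < i)]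

lemma foldr_ins (u : List ℕ) : ∀ (a : ℕ) (w : List ℕ),
    List.foldr ins w (ins a u) = ins a (List.foldr ins w u) := by
  induction u with
  | nil => intro a w; simp [ins]
  | cons b t ih =>
    intro a w
    by_cases hb : b < a
    · simp only [ins, if_pos hb, List.foldr_cons]
      rw [ih (a+1) w, ins_ins b a hb]
    · simp only [ins, if_neg hb, List.foldr_cons]

lemma foldr_nf (l : List ℕ) : ∀ w : List ℕ, List.foldr ins w l = List.foldr ins w (nf l) := by
  induction l with
  | nil => intro w; simp [nf]
  | cons a t ih =>
    intro w
    have : nf (a :: t) = ins a (nf t) := rfl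
    rw [this, foldr_ins, List.foldr_cons, ih w]

/-- The congruence of having equal normal forms. -/
def nfCon : Con (FreeMonoid ℕ) where
  r a b := nf a.toList = nf b.toList
  iseqv := ⟨fun _ => rfl, Eq.symm, Eq.trans⟩
  mul' := by
    intro a b x y hab hxy
    show nf (a.toList ++ x.toList) = nf (b.toList ++ y.toList)
    have h1 : ∀ (u v : List ℕ), nf (u ++ v) = List.foldr ins (nf v) u := by
      intro u v; simp [nf, List.foldr_append]
    rw [h1, h1, foldr_nf a.toList, foldr_nf b.toList, hab, hxy]

lemma thompsonCon_le_nfCon : thompsonCon ≤ nfCon := by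
  apply Con.conGen_le.mpr
  rintro a b ⟨i, j, hij, rfl, rfl⟩
  show nf [j, i] = nf [i, j+1]
  show ins j (ins i []) = ins i (ins (j+1) [])
  simp only [ins, if_pos hij]
  rw [if_neg (by omega)]

/-- Normal form map on the quotient. -/
def N : ThompsonS → List ℕ :=
  Quotient.lift (fun w : FreeMonoid ℕ => nf w.toList)
    (fun a b h => thompsonCon_le_nfCon h)

/-- Abbreviation for the quotient map. -/
def mk (w : FreeMonoid ℕ) : ThompsonS := thompsonCon.mk' w

lemma mk_mul (w v : FreeMonoid ℕ) : mk (w * v) = mk w * mk v := rfl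

lemma mk_ins (a : ℕ) (l : List ℕ) :
    mk (FreeMonoid.ofList (a :: l)) = mk (FreeMonoid.ofList (ins a l)) := by
  induction l generalizing a with
  | nil => rfl
  | cons b t ih =>
    by_cases hb : b < a
    · have hrel : mk (FreeMonoid.of a * FreeMonoid.of b)
          = mk (FreeMonoid.of b * FreeMonoid.of (a+1)) :=
        thompsonCon.eq.mpr (ConGen.Rel.of _ _ ⟨b, a, hb, rfl, rfl⟩)
      have h1 : mk (FreeMonoid.ofList (a :: b :: t))
          = mk (FreeMonoid.of a * FreeMonoid.of b) * mk (FreeMonoid.ofList t) := rfl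
      have h2 : mk (FreeMonoid.ofList (b :: ins (a+1) t))
          = mk (FreeMonoid.of b) * mk (FreeMonoid.ofList (ins (a+1) t)) := rfl
      have h3 : mk (FreeMonoid.of b * FreeMonoid.of (a+1)) * mk (FreeMonoid.ofList t)
          = mk (FreeMonoid.of b) * mk (FreeMonoid.ofList ((a+1) :: t)) := by
        rw [← mk_mul, ← mk_mul, mul_assoc]; rfl
      show mk (FreeMonoid.ofList (a :: b :: t))
          = mk (FreeMonoid.ofList (if b < a then b :: ins (a+1) t else a :: b :: t))
      rw [if_pos hb, h1, hrel, h3, h2, ih (a+1)]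
    · show mk (FreeMonoid.ofList (a :: b :: t))
          = mk (FreeMonoid.ofList (if b < a then b :: ins (a+1) t else a :: b :: t))
      rw [if_neg hb]

lemma mk_nf (l : List ℕ) :
    mk (FreeMonoid.ofList l) = mk (FreeMonoid.ofList (nf l)) := by
  induction l with
  | nil => rfl
  | cons a t ih =>
    have h1 : mk (FreeMonoid.ofList (a :: t))
        = mk (FreeMonoid.of a) * mk (FreeMonoid.ofList t) := rfl
    have h2 : mk (FreeMonoid.of a) * mk (FreeMonoid.ofList (nf t))
        = mk (FreeMonoid.ofList (a :: nf t)) := rfl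
    have h3 : nf (a :: t) = ins a (nf t) := rfl
    rw [h1, ih, h2, mk_ins, h3]

lemma N_mk (w : FreeMonoid ℕ) : N (mk w) = nf w.toList := rfl

lemma mk_surjective (s : ThompsonS) : ∃ w : FreeMonoid ℕ, s = mk w := by
  induction s using Con.induction_on with
  | H w => exact ⟨w, rfl⟩

lemma N_inj {s t : ThompsonS} (h : N s = N t) : s = t := by
  obtain ⟨a, rfl⟩ := mk_surjective s
  obtain ⟨b, rfl⟩ := mk_surjective t
  have ha : nf a.toList = nf b.toList := h
  calc mk a = mk (FreeMonoid.ofList (nf a.toList)) := mk_nf a.toList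
    _ = mk (FreeMonoid.ofList (nf b.toList)) := by rw [ha]
    _ = mk b := (mk_nf b.toList).symm

lemma N_one : N (1 : ThompsonS) = [] := rfl

lemma N_X_mul (m : ℕ) (u : ThompsonS) : N (X m * u) = ins m (N u) := by
  obtain ⟨w, rfl⟩ := mk_surjective u
  have h1 : X m * mk w = mk (FreeMonoid.of m * w) := rfl
  rw [h1, N_mk]
  rfl

lemma N_mul_X (m : ℕ) (u : ThompsonS) : N (u * X m) = List.foldr ins [m] (N u) := by
  obtain ⟨w, rfl⟩ := mk_surjective u
  have h1 : mk w * X m = mk (w * FreeMonoid.of m) := rfl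
  rw [h1, N_mk]
  have h2 : (w * FreeMonoid.of m).toList = w.toList ++ [m] := rfl
  rw [h2]
  show List.foldr ins [] (w.toList ++ [m]) = _
  rw [List.foldr_append]
  have h3 : List.foldr ins [] [m] = [m] := rfl
  rw [h3, foldr_nf]
  rfl

lemma ins_length (a : ℕ) (l : List ℕ) : (ins a l).length = l.length + 1 := by
  induction l generalizing a with
  | nil => rfl
  | cons b t ih =>
    by_cases hb : b < a
    · simp [ins, if_pos hb, ih]
    · simp [ins, if_neg hb]

lemma ins_inj (a : ℕ) {l l' : List ℕ} (h : ins a l = ins a l') : l = l' := by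
  induction l generalizing a l' with
  | nil =>
    cases l' with
    | nil => rfl
    | cons b' t' =>
      exfalso
      have := congrArg List.length h
      rw [ins_length, ins_length] at this
      simp at this
  | cons b t ih =>
    cases l' with
    | nil =>
      exfalso
      have := congrArg List.length h
      rw [ins_length, ins_length] at this
      simp at this
    | cons b' t' =>
      by_cases hb : b < a <;> by_cases hb' : b' < a
      · simp only [ins, if_pos hb, if_pos hb', List.cons.injEq] at h
        exact by rw [h.1, ih (a+1) h.2]
      · simp only [ins, if_pos hb, if_neg hb', List.cons.injEq] at h
        exact absurd h.1 (by omega)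
      · simp only [ins, if_neg hb, if_pos hb', List.cons.injEq] at h
        exact absurd h.1 (by omega)
      · simp only [ins, if_neg hb, if_neg hb', List.cons.injEq] at h
        rw [h.2.1, h.2.2]

lemma mem_ins_of_mem {x : ℕ} {l : List ℕ} (hx : x ∈ l) (a : ℕ) : x ∈ ins a l := by
  induction l generalizing a with
  | nil => simp at hx
  | cons b t ih =>
    by_cases hb : b < a
    · simp only [ins, if_pos hb]
      rcases List.mem_cons.mp hx with rfl | hx
      · exact List.mem_cons_self
      · exact List.mem_cons_of_mem _ (ih hx (a+1))
    · simp only [ins, if_neg hb]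
      exact List.mem_cons_of_mem _ hx

lemma mem_foldr_ins (m : ℕ) (l : List ℕ) : m ∈ List.foldr ins [m] l := by
  induction l with
  | nil => simp
  | cons a t ih => exact mem_ins_of_mem ih a

lemma ins_of_lt {m : ℕ} : ∀ {l : List ℕ}, (∀ x ∈ l, x < m) → ins m l = l ++ [m + l.length] := by
  intro l
  induction l generalizing m with
  | nil => intro _; rfl
  | cons b t ih =>
    intro hl
    have hb : b < m := hl b (List.mem_cons_self)
    simp only [ins, if_pos hb]
    rw [ih (fun x hx => by have := hl x (List.mem_cons_of_mem _ hx); omega)]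
    simp only [List.cons_append, List.length_cons]
    rw [show m + (t.length + 1) = m + 1 + t.length from by omega]

/-- Key cancellation: `X m * u = X m * w → u = w`. -/
lemma X_mul_left_cancel {m : ℕ} {u w : ThompsonS} (h : X m * u = X m * w) : u = w := by
  have := congrArg N h
  rw [N_X_mul, N_X_mul] at this
  exact N_inj (ins_inj m this)

/-- Key exclusion: if all letters of `N w` are `< m` and `w ≠ 1`, then no `u` satisfies
`u * X m = X m * w`. -/
lemma no_right_solution {m : ℕ} {w : ThompsonS} (hw : w ≠ 1)
    (hm : ∀ x ∈ N w, x < m) (u : ThompsonS) : u * X m ≠ X m * w := by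
  intro h
  have hNw : N w ≠ [] := fun hnil => hw (N_inj (by rw [hnil, N_one]))
  have := congrArg N h
  rw [N_mul_X, N_X_mul, ins_of_lt hm] at this
  have hmem : m ∈ N w ++ [m + (N w).length] := this ▸ mem_foldr_ins m (N u)
  rcases List.mem_append.mp hmem with h1 | h1
  · exact absurd (hm m h1) (lt_irrefl m)
  · have h2 : m = m + (N w).length := by simpa using h1
    have h3 : (N w).length = 0 := by omega
    exact hNw (List.length_eq_zero_iff.mp h3)

end ThompsonNF

namespace ThompsonNF

lemma le_foldr_max {x : ℕ} : ∀ {l : List ℕ}, x ∈ l → x ≤ l.foldr max 0 := by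
  intro l
  induction l with
  | nil => intro h; simp at h
  | cons b t ih =>
    intro h
    rcases List.mem_cons.mp h with rfl | h
    · exact le_max_left _ _
    · exact le_trans (ih h) (le_max_right _ _)

lemma single_eq_smul (u : ThompsonS) (c : ℂ) :
    (lp.single 2 u c : ThompsonH) = c • lp.single 2 u (1 : ℂ) := by
  rw [← lp.single_smul, smul_eq_mul, mul_one]

lemma clm_ext_single {T₁ T₂ : ThompsonH →L[ℂ] ThompsonH}
    (h : ∀ u : ThompsonS, T₁ (lp.single 2 u 1) = T₂ (lp.single 2 u 1)) : T₁ = T₂ := by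
  refine ContinuousLinearMap.ext fun f => ?_
  have hf := lp.hasSum_single (E := fun _ : ThompsonS => ℂ) ENNReal.ofNat_ne_top f
  have h1 : HasSum (fun u : ThompsonS => T₁ (lp.single 2 u (f u))) (T₁ f) := hf.mapL T₁
  have h2 : HasSum (fun u : ThompsonS => T₂ (lp.single 2 u (f u))) (T₂ f) := hf.mapL T₂
  refine h1.unique ?_
  convert h2 using 1
  funext u
  rw [single_eq_smul, map_smul, map_smul, h u]

lemma hasSum_coeff (A : ThompsonH →L[ℂ] ThompsonH) (φ : ThompsonS → ThompsonS)
    (hA : ∀ u, A (lp.single 2 u 1) = lp.single 2 (φ u) 1) (ξ : ThompsonH) (v : ThompsonS) :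
    HasSum (fun u => if φ u = v then ξ u else 0) (A ξ v) := by
  have hf := lp.hasSum_single (E := fun _ : ThompsonS => ℂ) ENNReal.ofNat_ne_top ξ
  have h1 : HasSum
      (fun u : ThompsonS => (innerSL ℂ (lp.single 2 v (1:ℂ))) (A (lp.single 2 u (ξ u))))
      ((innerSL ℂ (lp.single 2 v (1:ℂ))) (A ξ)) := hf.mapL ((innerSL ℂ _).comp A)
  have key : (fun u : ThompsonS => (innerSL ℂ (lp.single 2 v (1:ℂ))) (A (lp.single 2 u (ξ u))))
      = fun u => if φ u = v then ξ u else 0 := by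
    funext u
    have e1 : A (lp.single 2 u (ξ u)) = (ξ u) • lp.single 2 (φ u) (1:ℂ) := by
      rw [single_eq_smul u (ξ u), map_smul, hA u]
    rw [e1, map_smul]
    have e2 : (innerSL ℂ (lp.single 2 v (1:ℂ) : ThompsonH)) (lp.single 2 (φ u) (1:ℂ) : ThompsonH)
        = if φ u = v then 1 else 0 := by
      rw [innerSL_apply_apply, lp.inner_single_left]
      by_cases h : φ u = v
      · subst h
        rw [if_pos rfl, lp.single_apply_self]
        simp [RCLike.inner_apply]
      · rw [if_neg h, lp.single_apply_ne 2 (φ u) _ (fun hh => h hh.symm)]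
        simp [RCLike.inner_apply]
    rw [e2]
    simp only [smul_eq_mul, mul_ite, mul_one, mul_zero]
  have h2 : (innerSL ℂ (lp.single 2 v (1:ℂ))) (A ξ) = A ξ v := by
    rw [innerSL_apply_apply, lp.inner_single_left]
    simp [RCLike.inner_apply]
  rw [key, h2] at h1
  exact h1

end ThompsonNF


/-- Let `L`, `R` be the left and right regular (convolution) representations of
Thompson's semigroup on `ℓ²(S)` and `𝔅(S)` the Banach algebra generated by
`{L s}`.  Let `ℒ(S)` be the algebra of bounded left convolution operators, i.e.
the commutant of the right convolution operators, and let
`ℳ(S) = {T ∈ ℒ(S) : [T, A] ∈ 𝔅(S) for all A ∈ 𝔅(S)}`.  Then `ℳ(S)` is a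
norm-closed subspace of `ℒ(S)` containing `𝔅(S)`, and the commutant identity
`ℒ(S) ∩ 𝔅(S)′ = ℂ·I` holds, where `𝔅(S)′` is the commutant of `𝔅(S)` in
`B(ℓ²(S))`. -/
theorem thompson_M_closed_and_commutant_identity
    (L R : ThompsonS → (ThompsonH →L[ℂ] ThompsonH))
    (hL : ∀ s u : ThompsonS, L s (lp.single 2 u 1) = lp.single 2 (s * u) 1)
    (hR : ∀ s u : ThompsonS, R s (lp.single 2 u 1) = lp.single 2 (u * s) 1)
    (𝔅 : Subalgebra ℂ (ThompsonH →L[ℂ] ThompsonH))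
    (h𝔅 : 𝔅 = (Algebra.adjoin ℂ (Set.range L)).topologicalClosure)
    (ℒ ℳ : Set (ThompsonH →L[ℂ] ThompsonH))
    (hℒ : ℒ = {T | ∀ s : ThompsonS, Commute T (R s)})
    (hℳ : ℳ = {T ∈ ℒ | ∀ A ∈ 𝔅, T * A - A * T ∈ (𝔅 : Set (ThompsonH →L[ℂ] ThompsonH))}) :
    IsClosed ℳ ∧ (𝔅 : Set (ThompsonH →L[ℂ] ThompsonH)) ⊆ ℳ ∧
      ℒ ∩ {T | ∀ B ∈ 𝔅, Commute T B} =
        Set.range (fun c : ℂ => c • (1 : ThompsonH →L[ℂ] ThompsonH)) := by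
  have h𝔅closed : IsClosed (𝔅 : Set (ThompsonH →L[ℂ] ThompsonH)) := by
    rw [h𝔅]; exact Subalgebra.isClosed_topologicalClosure _
  have hL𝔅 : ∀ s, L s ∈ 𝔅 := fun s => by
    rw [h𝔅]
    exact (Algebra.adjoin ℂ (Set.range L)).le_topologicalClosure
      (Algebra.subset_adjoin ⟨s, rfl⟩)
  refine ⟨?_, ?_, ?_⟩
  · -- IsClosed ℳ
    have hM : ℳ = {T | ∀ s, T * R s = R s * T} ∩
        ⋂ A ∈ (𝔅 : Set (ThompsonH →L[ℂ] ThompsonH)),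
          (fun T => T * A - A * T) ⁻¹' (𝔅 : Set (ThompsonH →L[ℂ] ThompsonH)) := by
      rw [hℳ, hℒ]
      ext T
      constructor
      · rintro ⟨h1, h2⟩
        exact ⟨fun s => h1 s, Set.mem_iInter₂.mpr fun A hA => h2 A hA⟩
      · rintro ⟨h1, h2⟩
        exact ⟨fun s => h1 s, fun A hA => Set.mem_iInter₂.mp h2 A hA⟩
    rw [hM]
    refine IsClosed.inter ?_ ?_
    · have he : {T : ThompsonH →L[ℂ] ThompsonH | ∀ s, T * R s = R s * T}
          = ⋂ s, {T | T * R s = R s * T} := by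
        ext T; simp [Set.mem_iInter]
      rw [he]
      exact isClosed_iInter fun s =>
        isClosed_eq (continuous_id.mul continuous_const) (continuous_const.mul continuous_id)
    · exact isClosed_biInter fun A hA => h𝔅closed.preimage
        ((continuous_id.mul continuous_const).sub (continuous_const.mul continuous_id))
  · -- 𝔅 ⊆ ℳ
    intro B hB
    rw [hℳ]
    refine ⟨?_, fun A hA => ?_⟩
    · rw [hℒ]
      intro s
      have hcent : 𝔅 ≤ Subalgebra.centralizer ℂ {R s} := by
        rw [h𝔅]
        refine Subalgebra.topologicalClosure_minimal ?_ ?_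
        · refine Algebra.adjoin_le ?_
          rintro _ ⟨t, rfl⟩
          rw [SetLike.mem_coe, Subalgebra.mem_centralizer_iff]
          intro g hg
          rcases Set.mem_singleton_iff.mp hg with rfl
          refine ThompsonNF.clm_ext_single fun u => ?_
          rw [ContinuousLinearMap.mul_apply, ContinuousLinearMap.mul_apply,
            hL, hR, hR, hL, mul_assoc]
        · have he : (Subalgebra.centralizer ℂ {R s} : Set (ThompsonH →L[ℂ] ThompsonH))
              = {T | R s * T = T * R s} := by
            ext T
            rw [SetLike.mem_coe, Subalgebra.mem_centralizer_iff]
            simp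
          rw [he]
          exact isClosed_eq (continuous_const.mul continuous_id)
            (continuous_id.mul continuous_const)
      have hB' := hcent hB
      rw [Subalgebra.mem_centralizer_iff] at hB'
      exact (hB' (R s) rfl).symm
    · exact SetLike.mem_coe.mpr (𝔅.sub_mem (𝔅.mul_mem (SetLike.mem_coe.mp hB) hA)
        (𝔅.mul_mem hA (SetLike.mem_coe.mp hB)))
  · -- the commutant identity
    ext T
    simp only [Set.mem_inter_iff, Set.mem_setOf_eq, Set.mem_range]
    constructor
    · rintro ⟨hT1, hT2⟩
      rw [hℒ] at hT1
      set ξ := T (lp.single 2 (1 : ThompsonS) 1) with hξ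
      have hTL : ∀ s (x : ThompsonH), T (L s x) = L s (T x) := by
        intro s x
        have h := hT2 (L s) (hL𝔅 s)
        calc T (L s x) = (T * L s) x := rfl
          _ = (L s * T) x := by rw [h]
          _ = L s (T x) := rfl
      have hTR : ∀ s (x : ThompsonH), T (R s x) = R s (T x) := by
        intro s x
        have h := hT1 s
        calc T (R s x) = (T * R s) x := rfl
          _ = (R s * T) x := by rw [h]
          _ = R s (T x) := rfl
      have hLR : ∀ s, L s ξ = R s ξ := by
        intro s
        have e1 : L s ξ = T (lp.single 2 s 1) := by
          rw [hξ, ← hTL s, hL s 1, mul_one]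
        have e2 : R s ξ = T (lp.single 2 s 1) := by
          rw [hξ, ← hTR s, hR s 1, one_mul]
        rw [e1, e2]
      have hcoeff : ∀ w : ThompsonS, w ≠ 1 → ξ w = 0 := by
        intro w hw
        set m := (ThompsonNF.N w).foldr max 0 + 1 with hm
        have hmlt : ∀ x ∈ ThompsonNF.N w, x < m := fun x hx => by
          have := ThompsonNF.le_foldr_max hx; omega
        have h1 := ThompsonNF.hasSum_coeff (L (X m)) (fun u => X m * u)
          (fun u => hL (X m) u) ξ (X m * w)
        have h2 := ThompsonNF.hasSum_coeff (R (X m)) (fun u => u * X m)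
          (fun u => hR (X m) u) ξ (X m * w)
        have e1 : (fun u : ThompsonS => if X m * u = X m * w then ξ u else 0)
            = fun u => if u = w then ξ w else 0 := by
          funext u
          by_cases h : u = w
          · subst h; simp
          · rw [if_neg h, if_neg (fun hh => h (ThompsonNF.X_mul_left_cancel hh))]
        have e2 : (fun u : ThompsonS => if u * X m = X m * w then ξ u else 0)
            = fun _ => (0 : ℂ) := by
          funext u
          rw [if_neg (ThompsonNF.no_right_solution hw hmlt u)]
        rw [e1] at h1
        rw [e2] at h2
        have hv1 : ξ w = (L (X m) ξ) (X m * w) := (hasSum_ite_eq w (ξ w)).unique h1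
        have hv2 : ((R (X m) ξ) (X m * w) : ℂ) = 0 := h2.unique hasSum_zero
        rw [hv1, hLR (X m), hv2]
      refine ⟨ξ 1, ?_⟩
      show (ξ 1 : ℂ) • (1 : ThompsonH →L[ℂ] ThompsonH) = T
      have hξeq : ξ = (ξ 1 : ℂ) • lp.single 2 (1 : ThompsonS) 1 := by
        apply lp.ext
        funext w
        rw [lp.coeFn_smul, Pi.smul_apply]
        by_cases h : w = 1
        · subst h; rw [lp.single_apply_self]; simp
        · rw [lp.single_apply_ne 2 _ _ h, hcoeff w h]; simp
      refine ThompsonNF.clm_ext_single fun u => ?_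
      have hu : (lp.single 2 u 1 : ThompsonH) = L u (lp.single 2 (1 : ThompsonS) 1) := by
        rw [hL u 1, mul_one]
      rw [ContinuousLinearMap.smul_apply, ContinuousLinearMap.one_apply]
      calc (ξ 1 : ℂ) • (lp.single 2 u 1 : ThompsonH)
          = (ξ 1 : ℂ) • L u (lp.single 2 (1 : ThompsonS) 1) := by rw [← hu]
        _ = L u ((ξ 1 : ℂ) • lp.single 2 (1 : ThompsonS) 1) := (map_smul _ _ _).symm
        _ = L u ξ := by rw [← hξeq]
        _ = T (L u (lp.single 2 (1 : ThompsonS) 1)) := by rw [hTL u]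
        _ = T (lp.single 2 u 1) := by rw [← hu]
    · rintro ⟨c, rfl⟩
      constructor
      · rw [hℒ]
        intro s
        show c • (1 : ThompsonH →L[ℂ] ThompsonH) * R s = R s * (c • 1)
        rw [smul_mul_assoc, one_mul, mul_smul_comm, mul_one]
      · intro B hB
        show c • (1 : ThompsonH →L[ℂ] ThompsonH) * B = B * (c • 1)
        rw [smul_mul_assoc, one_mul, mul_smul_comm, mul_one]
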